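/- Let p be an odd prime. If there exist infinitely many primes θ satisfying Condition N-C for p, then there are no nonzero integers x, y, z with x^p + y^p = z^p. (Germain's grand plan: infinitely many qualifying auxiliary primes imply Fermat's Last Theorem for exponent p.) -/

import Mathlib

/-- Germain's grand plan: if for an odd prime p there are infinitely many
primes θ satisfying Condition N-C for p, then Fermat's Last Theorem holds
for exponent p. -/
theorem grand_plan
    (p : ℕ) (hp : p.Prime) (hpodd : Odd p)
    (hinf : {θ : ℕ | θ.Prime ∧
      ¬ ∃ a b : ℤ, ¬ (θ : ℤ) ∣ a ∧ ¬ (θ : ℤ) ∣ b ∧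
        b ^ p ≡ a ^ p + 1 [ZMOD (θ : ℤ)]}.Infinite) :
    ¬ ∃ x y z : ℤ, x ≠ 0 ∧ y ≠ 0 ∧ z ≠ 0 ∧ x ^ p + y ^ p = z ^ p := by
  rintro ⟨x, y, z, hx, hy, hz, h⟩
  obtain ⟨θ, ⟨hθp, hθnc⟩, hθgt⟩ := hinf.exists_gt (x * y * z).natAbs
  haveI : Fact θ.Prime := ⟨hθp⟩
  have hxyz : x * y * z ≠ 0 := by
    exact mul_ne_zero (mul_ne_zero hx hy) hz
  have hθdvd : ¬ (θ : ℤ) ∣ x * y * z := by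
    intro hd
    have h1 : θ ∣ (x * y * z).natAbs := by
      simpa using Int.natAbs_dvd_natAbs.mpr hd
    have := Nat.le_of_dvd (Int.natAbs_pos.mpr hxyz) h1
    omega
  have hθx : ¬ (θ : ℤ) ∣ x := fun hd => hθdvd (hd.mul_right _ |>.mul_right _)
  have hθy : ¬ (θ : ℤ) ∣ y := fun hd => hθdvd ((hd.mul_left _).mul_right _)
  have hθz : ¬ (θ : ℤ) ∣ z := fun hd => hθdvd (hd.mul_left _)
  set X : ZMod θ := (x : ZMod θ) with hXdef
  set Y : ZMod θ := (y : ZMod θ) with hYdef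
  set Z : ZMod θ := (z : ZMod θ) with hZdef
  have hX : X ≠ 0 := fun h0 => hθx ((ZMod.intCast_zmod_eq_zero_iff_dvd _ _).mp h0)
  have hY : Y ≠ 0 := fun h0 => hθy ((ZMod.intCast_zmod_eq_zero_iff_dvd _ _).mp h0)
  have hZ : Z ≠ 0 := fun h0 => hθz ((ZMod.intCast_zmod_eq_zero_iff_dvd _ _).mp h0)
  have hcast : X ^ p + Y ^ p = Z ^ p := by
    have := congrArg (fun t : ℤ => (t : ZMod θ)) h
    push_cast at this
    simpa [hXdef, hYdef, hZdef] using this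
  set A : ZMod θ := Y * X⁻¹ with hAdef
  set B : ZMod θ := Z * X⁻¹ with hBdef
  have hA : A ≠ 0 := mul_ne_zero hY (inv_ne_zero hX)
  have hB : B ≠ 0 := mul_ne_zero hZ (inv_ne_zero hX)
  have hkey : B ^ p = A ^ p + 1 := by
    rw [hAdef, hBdef]
    field_simp
    rw [div_pow, div_pow, ← hcast, add_div, div_self (pow_ne_zero _ hX)]; ring
  apply hθnc
  refine ⟨(A.val : ℤ), (B.val : ℤ), ?_, ?_, ?_⟩
  · intro hd
    have hd' : θ ∣ A.val := Int.natCast_dvd_natCast.mp hd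
    have h0 : A.val = 0 := Nat.eq_zero_of_dvd_of_lt hd' (ZMod.val_lt A)
    exact hA ((ZMod.val_eq_zero A).mp h0)
  · intro hd
    have hd' : θ ∣ B.val := Int.natCast_dvd_natCast.mp hd
    have h0 : B.val = 0 := Nat.eq_zero_of_dvd_of_lt hd' (ZMod.val_lt B)
    exact hB ((ZMod.val_eq_zero B).mp h0)
  · rw [← ZMod.intCast_eq_intCast_iff]
    push_cast
    rw [ZMod.natCast_val, ZMod.natCast_val, ZMod.cast_id, ZMod.cast_id]
    exact hkey
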